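/- The restriction of F to S is topologically conjugate to the inverse limit of g: the map θ : S → Π_g is a homeomorphism satisfying θ ∘ (F restricted to S) = ĝ ∘ θ. -/

import Mathlib

/-- The inverse limit Π_g of a map g : T → T: sequences (t_0, t_1, …) in T
with g(t_{i+1}) = t_i for all i, topologized as a subspace of the product T^ℕ. -/
abbrev InvLim {T : Type*} (g : T → T) : Type _ :=
  {t : ℕ → T // ∀ i : ℕ, g (t (i + 1)) = t i}

/-- The shift map ĝ : Π_g → Π_g, ĝ(t_0, t_1, …) = (g(t_0), t_0, t_1, …). -/
def shiftMap {T : Type*} (g : T → T) (t : InvLim g) : InvLim g :=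
  ⟨fun i => Nat.casesOn i (g (t.1 0)) fun j => t.1 j, by
    intro i
    cases i with
    | zero => rfl
    | succ j => exact t.2 j⟩

/-- F restricted to S is topologically conjugate to the inverse
limit of g: θ : S → Π_g is a homeomorphism and θ ∘ (F|_S) = ĝ ∘ θ. -/
theorem stmt4 {T N : Type*} [MetricSpace T] [CompactSpace T] [Nonempty T]
    [MetricSpace N] [CompactSpace N] [Nonempty N]
    (g : T → T) (hgc : Continuous g) (hgs : Function.Surjective g)
    (hgcov : IsCoveringMap g)
    (F : T × N → T × N) (hFc : Continuous F) (hFi : Function.Injective F)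
    (hfib : ∀ p : T × N, (F p).1 = g p.1)
    (C lam : ℝ) (hC : 0 < C) (hlam0 : 0 < lam) (hlam1 : lam < 1)
    (hcontr : ∀ (t : T) (n : ℕ),
      Metric.diam (F^[n] '' ({t} ×ˢ (Set.univ : Set N))) ≤ C * lam ^ n)
    (S : Set (T × N)) (hS : S = ⋂ l : ℕ, F^[l] '' Set.univ)
    (θ : S → InvLim g)
    (hθ : ∀ (p : S) (i : ℕ),
      (p : T × N) ∈ F^[i] '' ({(θ p).1 i} ×ˢ (Set.univ : Set N))) :
    (∀ p : S, F (p : T × N) ∈ S) ∧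
    (∃ e : S ≃ₜ InvLim g, ∀ p : S, e p = θ p) ∧
    (∀ (p : S) (hp : F (p : T × N) ∈ S),
      θ ⟨F (p : T × N), hp⟩ = shiftMap g (θ p)) := by
  have hFiC : ∀ i : ℕ, Continuous (F^[i]) := fun i => hFc.iterate i
  have hFiI : ∀ i : ℕ, Function.Injective (F^[i]) := fun i => hFi.iterate i
  -- uniqueness of the fiber label
  have key : ∀ (p : T × N) (i : ℕ) (t t' : T),
      p ∈ F^[i] '' ({t} ×ˢ (Set.univ : Set N)) →
      p ∈ F^[i] '' ({t'} ×ˢ (Set.univ : Set N)) → t = t' := by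
    rintro p i t t' ⟨a, ⟨ha1, -⟩, rfl⟩ ⟨b, ⟨hb1, -⟩, hb⟩
    have hba : b = a := hFiI i hb
    simp only [Set.mem_singleton_iff] at ha1 hb1
    rw [← ha1, ← hb1, hba]
  have θval : ∀ (p : S) (i : ℕ) (t : T),
      (p : T × N) ∈ F^[i] '' ({t} ×ˢ (Set.univ : Set N)) → (θ p).1 i = t :=
    fun p i t h => key _ i _ _ (hθ p i) h
  -- membership in S in terms of iterates
  have hmemS : ∀ q : T × N, q ∈ S ↔ ∀ l : ℕ, q ∈ F^[l] '' Set.univ := by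
    intro q; rw [hS]; exact Set.mem_iInter
  -- Part 1
  have part1 : ∀ p : S, F (p : T × N) ∈ S := by
    intro p
    rw [hmemS]
    intro l
    cases l with
    | zero => simp
    | succ j =>
      have hp : (p : T × N) ∈ F^[j] '' Set.univ := (hmemS _).mp p.2 j
      rw [Function.iterate_succ', Set.image_comp]
      exact Set.mem_image_of_mem F hp
  -- Part 3
  have part3 : ∀ (p : S) (hp : F (p : T × N) ∈ S),
      θ ⟨F (p : T × N), hp⟩ = shiftMap g (θ p) := by
    intro p hp
    apply Subtype.ext
    funext i
    cases i with
    | zero =>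
      have h0 : (p : T × N) ∈ ({(θ p).1 0} ×ˢ (Set.univ : Set N)) := by
        simpa using hθ p 0
      have hp1 : (p : T × N).1 = (θ p).1 0 := h0.1
      have : F (p : T × N) ∈ F^[0] '' ({g ((θ p).1 0)} ×ˢ (Set.univ : Set N)) := by
        simp only [Function.iterate_zero, Set.image_id]
        refine ⟨?_, Set.mem_univ _⟩
        rw [Set.mem_singleton_iff, hfib, hp1]
      exact θval ⟨F (p : T × N), hp⟩ 0 _ this
    | succ j =>
      have : F (p : T × N) ∈ F^[j + 1] '' ({(θ p).1 j} ×ˢ (Set.univ : Set N)) := by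
        rw [Function.iterate_succ', Set.image_comp]
        exact Set.mem_image_of_mem F (hθ p j)
      exact θval ⟨F (p : T × N), hp⟩ (j + 1) _ this
  -- S is compact
  have hScompact : IsCompact S := by
    rw [hS]
    refine IsCompact.of_isClosed_subset isCompact_univ ?_ (Set.subset_univ _)
    exact isClosed_iInter fun l =>
      (((isCompact_univ).image (hFiC l)).isClosed)
  have : CompactSpace S := isCompact_iff_compactSpace.mp hScompact
  -- continuity of θ
  have hθcont : Continuous θ := by
    have hv : Continuous fun p : S => (θ p).1 := by
      apply continuous_pi
      intro i
      have hCE := (hFiC i).isClosedEmbedding (hFiI i)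
      set h := Topology.IsEmbedding.toHomeomorph (f := F^[i]) hCE.toIsEmbedding with hh
      have hmem : ∀ p : S, (p : T × N) ∈ Set.range (F^[i]) := by
        intro p
        obtain ⟨a, -, ha⟩ := (hmemS _).mp p.2 i
        exact ⟨a, ha⟩
      have heq : ∀ p : S, (θ p).1 i = (h.symm ⟨(p : T × N), hmem p⟩ : T × N).1 := by
        intro p
        apply θval
        refine ⟨h.symm ⟨(p : T × N), hmem p⟩, ⟨rfl, Set.mem_univ _⟩, ?_⟩
        have := h.apply_symm_apply ⟨(p : T × N), hmem p⟩
        exact congrArg Subtype.val this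
      have : (fun p : S => (θ p).1 i)
          = fun p : S => (h.symm ⟨(p : T × N), hmem p⟩ : T × N).1 := funext heq
      rw [this]
      exact continuous_fst.comp (h.symm.continuous.comp
        (continuous_subtype_val.subtype_mk _))
    exact hv.subtype_mk _
  -- injectivity of θ
  have hinj : Function.Injective θ := by
    intro p q hpq
    have hd : ∀ n : ℕ, dist (p : T × N) (q : T × N) ≤ C * lam ^ n := by
      intro n
      have hp := hθ p n
      have hq := hθ q n
      rw [hpq] at hp
      have hb : Bornology.IsBounded (F^[n] '' ({(θ q).1 n} ×ˢ (Set.univ : Set N))) :=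
        ((isCompact_singleton.prod isCompact_univ).image (hFiC n)).isBounded
      exact le_trans (Metric.dist_le_diam_of_mem hb hp hq) (hcontr _ n)
    have hlim : Filter.Tendsto (fun n : ℕ => C * lam ^ n) Filter.atTop (nhds 0) := by
      have := tendsto_pow_atTop_nhds_zero_of_lt_one hlam0.le hlam1
      simpa using this.const_mul C
    have : dist (p : T × N) (q : T × N) ≤ 0 :=
      ge_of_tendsto hlim (Filter.Eventually.of_forall hd)
    exact Subtype.ext (dist_le_zero.mp this)
  -- surjectivity of θ
  have hsurj : Function.Surjective θ := by
    intro t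
    set K : ℕ → Set (T × N) := fun n => F^[n] '' ({t.1 n} ×ˢ (Set.univ : Set N)) with hK
    have hKsub : ∀ n, K (n + 1) ⊆ K n := by
      intro n
      rw [hK]
      simp only
      rw [Function.iterate_succ, Set.image_comp]
      apply Set.image_mono
      rintro x ⟨a, ⟨ha1, -⟩, rfl⟩
      simp only [Set.mem_singleton_iff] at ha1
      refine ⟨?_, Set.mem_univ _⟩
      simp only [Set.mem_singleton_iff]
      rw [hfib, ha1, t.2 n]
    have hKne : ∀ n, (K n).Nonempty := fun n =>
      (Set.singleton_nonempty _|>.prod Set.univ_nonempty).image _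
    have hKcomp : ∀ n, IsCompact (K n) := fun n =>
      (isCompact_singleton.prod isCompact_univ).image (hFiC n)
    obtain ⟨p, hp⟩ := IsCompact.nonempty_iInter_of_sequence_nonempty_isCompact_isClosed
      K hKsub hKne (hKcomp 0) (fun n => (hKcomp n).isClosed)
    have hpK : ∀ n, p ∈ K n := Set.mem_iInter.mp hp
    have hpS : p ∈ S := by
      rw [hmemS]
      intro l
      obtain ⟨a, -, ha⟩ := hpK l
      exact ⟨a, Set.mem_univ _, ha⟩
    refine ⟨⟨p, hpS⟩, ?_⟩
    exact Subtype.ext (funext fun i => θval ⟨p, hpS⟩ i _ (hpK i))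
  -- assemble
  refine ⟨part1, ?_, part3⟩
  have hbij : Function.Bijective θ := ⟨hinj, hsurj⟩
  let eq : S ≃ InvLim g := Equiv.ofBijective θ hbij
  exact ⟨Continuous.homeoOfEquivCompactToT2 (f := eq) hθcont, fun p => rfl⟩
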